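/- Let (C, A) be an a-output-stable pair with abelianized observability gramian G^a = sum over n in Z_+^d of (n!/|n|!) * (sum over pairs of words v, u with abelianization n of A^{v^T *} C* C A^u), where v^T denotes the reversed word. Then G^a satisfies the reverse Stein inequality G^a - A_1* G^a A_1 - ... - A_d* G^a A_d <= C* C. -/

import Mathlib

open ContinuousLinearMap

noncomputable section

variable {X Y : Type*}
  [NormedAddCommGroup X] [InnerProductSpace ℂ X] [CompleteSpace X]
  [NormedAddCommGroup Y] [InnerProductSpace ℂ Y] [CompleteSpace Y]

/-- `A^v`: for a word `v = i_N … i_1` (stored as the list `[i_N, …, i_1]`), the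
product `A_{i_N} ∘ A_{i_{N-1}} ∘ ⋯ ∘ A_{i_1}`. -/
def wordProd {d : ℕ} (A : Fin d → X →L[ℂ] X) (v : List (Fin d)) : X →L[ℂ] X :=
  (v.map A).prod

/-- `A^w` for a word of length `N` encoded as a function `w : Fin N → Fin d`. -/
def funProd {d N : ℕ} (A : Fin d → X →L[ℂ] X) (w : Fin N → Fin d) : X →L[ℂ] X :=
  wordProd A (List.ofFn w)

/-- The weight `n!/|n|!` attached to a multi-index `n`. -/
def wt {d : ℕ} (n : Fin d → ℕ) : ℝ :=
  ((∏ i, Nat.factorial (n i) : ℕ) : ℝ) / ((Nat.factorial (∑ i, n i) : ℕ) : ℝ)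

/-- The finite set of words of length `|n|` (encoded as functions `Fin |n| → Fin d`)
whose abelianization is the multi-index `n`. -/
def abWords {d : ℕ} (n : Fin d → ℕ) : Finset (Fin (∑ i, n i) → Fin d) :=
  Finset.univ.filter fun w => ∀ i, (List.ofFn w).count i = n i

set_option linter.unusedSectionVars false

set_option maxHeartbeats 1000000

namespace Stmt8Aux

variable {d : ℕ}

lemma sum_count (l : List (Fin d)) : ∑ i, l.count i = l.length := by
  induction l with
  | nil => simp
  | cons a t ih =>
    simp only [List.count_cons, List.length_cons, Finset.sum_add_distrib, ih]
    simp [Finset.sum_ite_eq]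

def wordsOf (n : Fin d → ℕ) : Finset (List (Fin d)) := (abWords n).image List.ofFn

lemma mem_wordsOf {n : Fin d → ℕ} {l : List (Fin d)} :
    l ∈ wordsOf n ↔ ∀ i, l.count i = n i := by
  constructor
  · rintro hl i
    simp only [wordsOf, Finset.mem_image] at hl
    obtain ⟨w, hw, rfl⟩ := hl
    simp only [abWords, Finset.mem_filter] at hw
    exact hw.2 i
  · intro h
    have hlen : l.length = ∑ i, n i := by
      rw [← sum_count l]; exact Finset.sum_congr rfl fun i _ => h i
    simp only [wordsOf, Finset.mem_image]
    refine ⟨fun k => l.get (Fin.cast hlen.symm k), ?_, ?_⟩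
    · simp only [abWords, Finset.mem_filter, Finset.mem_univ, true_and]
      intro i
      have : List.ofFn (fun k => l.get (Fin.cast hlen.symm k)) = l := by
        apply List.ext_get
        · simp [hlen]
        · intro m h1 h2; simp
      rw [this]; exact h i
    · apply List.ext_get
      · simp [hlen]
      · intro m h1 h2; simp

lemma wordsOf_zero : wordsOf (0 : Fin d → ℕ) = {[]} := by
  ext l
  simp only [mem_wordsOf, Finset.mem_singleton, Pi.zero_apply]
  constructor
  · intro h
    cases l with
    | nil => rfl
    | cons a t => have := h a; simp [List.count_cons] at this
  · rintro rfl; simp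

end Stmt8Aux

namespace Stmt8Aux

set_option linter.unusedSectionVars false

variable {X Y : Type*}
  [NormedAddCommGroup X] [InnerProductSpace ℂ X] [CompleteSpace X]
  [NormedAddCommGroup Y] [InnerProductSpace ℂ Y] [CompleteSpace Y]
variable {d : ℕ} (A : Fin d → X →L[ℂ] X) (C : X →L[ℂ] Y)

lemma wordProd_append (l : List (Fin d)) (j : Fin d) :
    wordProd A (l ++ [j]) = (wordProd A l).comp (A j) := by
  simp only [wordProd, List.map_append, List.prod_append, List.map_singleton,
    List.prod_singleton]
  rfl

def opT (n : Fin d → ℕ) : X →L[ℂ] Y := ∑ l ∈ wordsOf n, C ∘L wordProd A l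

lemma opT_eq (n : Fin d → ℕ) : opT A C n = ∑ u ∈ abWords n, C ∘L funProd A u := by
  rw [opT, wordsOf, Finset.sum_image]
  · rfl
  · intro a _ b _ h
    exact List.ofFn_injective h

lemma opT_zero : opT A C (0 : Fin d → ℕ) = C := by
  rw [opT, wordsOf_zero]
  simp [wordProd, ContinuousLinearMap.one_def]

lemma filter_getLast_eq_empty {m : Fin d → ℕ} {j : Fin d} (hj : m j = 0) :
    (wordsOf m).filter (fun l => l.getLast? = some j) = ∅ := by
  rw [Finset.filter_eq_empty_iff]
  intro l hl hlast
  have hmem : j ∈ l := by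
    have := List.mem_getLast?_eq_getLast (l := l) (x := j) (by rw [hlast]; rfl)
    obtain ⟨h, rfl⟩ := this
    exact List.getLast_mem h
  have : l.count j ≠ 0 := by
    simpa [List.count_eq_zero] using hmem
  rw [mem_wordsOf] at hl
  exact this (by rw [hl j, hj])

lemma count_concat (i j : Fin d) (t : List (Fin d)) :
    (t ++ [j]).count i = t.count i + (if i = j then 1 else 0) := by
  by_cases h : i = j <;> simp [List.count_append, h, List.count_singleton, @eq_comm _ j i]

lemma filter_getLast_eq_image {m : Fin d → ℕ} {j : Fin d} (hj : 0 < m j) :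
    (wordsOf m).filter (fun l => l.getLast? = some j)
      = (wordsOf (m - Pi.single j 1)).image (fun l => l ++ [j]) := by
  ext l
  simp only [Finset.mem_filter, Finset.mem_image, mem_wordsOf]
  constructor
  · rintro ⟨hcount, hlast⟩
    have hne : l ≠ [] := by rintro rfl; simp at hlast
    have hlj : l.getLast hne = j := by
      rw [List.getLast?_eq_getLast_of_ne_nil hne] at hlast
      exact Option.some_injective _ hlast
    have hl : l.dropLast ++ [j] = l := by
      rw [← hlj]; exact List.dropLast_append_getLast hne
    refine ⟨l.dropLast, ?_, hl⟩
    intro i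
    have hc : l.dropLast.count i + (if i = j then 1 else 0) = m i := by
      rw [← hcount i]
      conv_rhs => rw [← hl]
      exact (count_concat i j l.dropLast).symm
    rw [Pi.sub_apply]
    by_cases hij : i = j
    · subst hij; rw [Pi.single_eq_same]
      rw [if_pos rfl] at hc; omega
    · rw [Pi.single_eq_of_ne hij]
      simp only [if_neg hij, add_zero] at hc
      simp [hc]
  · rintro ⟨t, ht, rfl⟩
    refine ⟨?_, by simp⟩
    intro i
    rw [count_concat, ht i, Pi.sub_apply]
    by_cases hij : i = j
    · subst hij; rw [Pi.single_eq_same, if_pos rfl]; omega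
    · rw [Pi.single_eq_of_ne hij]
      simp [hij]

lemma opT_decomp (m : Fin d → ℕ) (hm : m ≠ 0) (x : X) :
    opT A C m x = ∑ j, (if m j = 0 then (0 : Y)
      else opT A C (m - Pi.single j 1) (A j x)) := by
  have key : opT A C m = ∑ j, ∑ l ∈ (wordsOf m).filter (fun l => l.getLast? = some j),
      C ∘L wordProd A l := by
    rw [opT]
    rw [← Finset.sum_fiberwise_of_maps_to (g := fun l : List (Fin d) => l.getLast?)
      (t := (Finset.univ : Finset (Fin d)).image Option.some) ?_ (fun l => C ∘L wordProd A l)]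
    · rw [Finset.sum_image (by intro a _ b _ h; exact Option.some_injective _ h)]
    · intro l hl
      rw [mem_wordsOf] at hl
      have hne : l ≠ [] := by
        rintro rfl
        obtain ⟨j, hj⟩ := Function.ne_iff.mp hm
        exact hj (by rw [← hl j]; simp)
      simp only [Finset.mem_image, Finset.mem_univ, true_and]
      exact ⟨l.getLast hne, (List.getLast?_eq_getLast_of_ne_nil hne).symm⟩
  rw [key]
  rw [ContinuousLinearMap.sum_apply]
  refine Finset.sum_congr rfl fun j _ => ?_
  by_cases hj : m j = 0
  · rw [if_pos hj, filter_getLast_eq_empty hj]; simp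
  · rw [if_neg hj, filter_getLast_eq_image (Nat.pos_of_ne_zero hj)]
    rw [Finset.sum_image (by intro a _ b _ h; exact List.append_left_injective _ h)]
    simp only [opT, ContinuousLinearMap.sum_apply]
    refine Finset.sum_congr rfl fun l _ => ?_
    rw [wordProd_append]
    rfl

end Stmt8Aux

namespace Stmt8Aux

variable {d : ℕ}

lemma wt_nonneg (n : Fin d → ℕ) : 0 ≤ wt n := by
  unfold wt
  positivity

lemma wt_zero : wt (0 : Fin d → ℕ) = 1 := by
  unfold wt
  simp

lemma wt_identity {m : Fin d → ℕ} {j : Fin d} (hj : 0 < m j) :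
    wt m * (∑ i, m i : ℕ) = wt (m - Pi.single j 1) * (m j : ℕ) := by
  have hs : (∑ i, ((m - Pi.single j 1) : Fin d → ℕ) i) = (∑ i, m i) - 1 := by
    have h1 : ∑ i, ((m - Pi.single j 1) : Fin d → ℕ) i
        = (m j - 1) + ∑ i ∈ Finset.univ.erase j, m i := by
      rw [← Finset.add_sum_erase _ _ (Finset.mem_univ j)]
      congr 1
      · simp
      · refine Finset.sum_congr rfl fun i hi => ?_
        rw [Pi.sub_apply, Pi.single_eq_of_ne (Finset.ne_of_mem_erase hi)]
        simp
    have h2 : ∑ i, m i = m j + ∑ i ∈ Finset.univ.erase j, m i := by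
      rw [← Finset.add_sum_erase _ _ (Finset.mem_univ j)]
    omega
  have hp : (∏ i, Nat.factorial (((m - Pi.single j 1) : Fin d → ℕ) i)) * m j
      = ∏ i, Nat.factorial (m i) := by
    rw [← Finset.prod_erase_mul _ _ (Finset.mem_univ j),
      ← Finset.prod_erase_mul _ _ (Finset.mem_univ j)]
    have he : ∀ i ∈ Finset.univ.erase j,
        Nat.factorial (((m - Pi.single j 1) : Fin d → ℕ) i) = Nat.factorial (m i) := by
      intro i hi
      rw [Pi.sub_apply, Pi.single_eq_of_ne (Finset.ne_of_mem_erase hi)]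
      simp
    rw [Finset.prod_congr rfl he]
    rw [mul_assoc]
    congr 1
    rw [Pi.sub_apply, Pi.single_eq_same]
    rw [mul_comm]
    exact Nat.mul_factorial_pred hj.ne'
  unfold wt
  rw [hs]
  have hS : 0 < ∑ i, m i := by
    calc 0 < m j := hj
    _ ≤ ∑ i, m i := Finset.single_le_sum (fun i _ => Nat.zero_le _) (Finset.mem_univ j)
  have hfac : (∑ i, m i).factorial = (∑ i, m i) * ((∑ i, m i) - 1).factorial :=
    (Nat.mul_factorial_pred hS.ne').symm
  rw [div_mul_eq_mul_div, div_mul_eq_mul_div, div_eq_div_iff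
    (by exact_mod_cast (Nat.factorial_pos _).ne') (by exact_mod_cast (Nat.factorial_pos _).ne')]
  push_cast [← hp, hfac]
  ring

end Stmt8Aux

namespace Stmt8Aux

variable {d : ℕ}

lemma cs_sq {E : Type*} [NormedAddCommGroup E] (y : Fin d → E) (c : Fin d → ℝ)
    (hc0 : ∀ j, 0 ≤ c j) (hc1 : ∑ j, c j ≤ 1) (hy : ∀ j, c j = 0 → y j = 0) :
    ‖∑ j, y j‖ ^ 2 ≤ ∑ j, (if c j = 0 then 0 else ‖y j‖ ^ 2 / c j) := by
  set b : Fin d → ℝ := fun j => if c j = 0 then 0 else ‖y j‖ / Real.sqrt (c j) with hbdef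
  have hbnn : ∀ j, 0 ≤ b j := by
    intro j
    by_cases h : c j = 0
    · simp [hbdef, h]
    · simp only [hbdef, if_neg h]
      positivity
  have hb : ∀ j, ‖y j‖ = Real.sqrt (c j) * b j := by
    intro j
    by_cases h : c j = 0
    · simp [hbdef, h, hy j h]
    · have hcpos : 0 < c j := lt_of_le_of_ne (hc0 j) (Ne.symm h)
      have hs : Real.sqrt (c j) ≠ 0 := by positivity
      simp only [hbdef, if_neg h]
      rw [mul_div_assoc', mul_div_cancel_left₀ _ hs]
  have h1 : ‖∑ j, y j‖ ≤ ∑ j, Real.sqrt (c j) * b j := by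
    refine (norm_sum_le _ _).trans ?_
    refine le_of_eq (Finset.sum_congr rfl fun j _ => hb j)
  have h2 : (∑ j, Real.sqrt (c j) * b j) ^ 2
      ≤ (∑ j, Real.sqrt (c j) ^ 2) * ∑ j, b j ^ 2 :=
    Finset.sum_mul_sq_le_sq_mul_sq _ _ _
  have h3 : (∑ j, Real.sqrt (c j) ^ 2) = ∑ j, c j :=
    Finset.sum_congr rfl fun j _ => Real.sq_sqrt (hc0 j)
  have h4 : ‖∑ j, y j‖ ^ 2 ≤ (∑ j, Real.sqrt (c j) * b j) ^ 2 := by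
    apply pow_le_pow_left₀ (norm_nonneg _) h1
  have h5 : (∑ j, Real.sqrt (c j) ^ 2) * (∑ j, b j ^ 2) ≤ ∑ j, b j ^ 2 := by
    rw [h3]
    have : 0 ≤ ∑ j, b j ^ 2 := Finset.sum_nonneg fun j _ => sq_nonneg _
    nlinarith
  have h6 : ∀ j, b j ^ 2 = (if c j = 0 then 0 else ‖y j‖ ^ 2 / c j) := by
    intro j
    by_cases h : c j = 0
    · simp [hbdef, h]
    · have hcpos : 0 < c j := lt_of_le_of_ne (hc0 j) (Ne.symm h)
      simp only [hbdef, if_neg h, div_pow, Real.sq_sqrt (hc0 j)]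
  calc ‖∑ j, y j‖ ^ 2 ≤ (∑ j, Real.sqrt (c j) * b j) ^ 2 := h4
  _ ≤ (∑ j, Real.sqrt (c j) ^ 2) * ∑ j, b j ^ 2 := h2
  _ ≤ ∑ j, b j ^ 2 := h5
  _ = _ := Finset.sum_congr rfl fun j _ => h6 j

end Stmt8Aux

namespace Stmt8Aux

set_option maxHeartbeats 800000

variable {X Y : Type*}
  [NormedAddCommGroup X] [InnerProductSpace ℂ X] [CompleteSpace X]
  [NormedAddCommGroup Y] [InnerProductSpace ℂ Y] [CompleteSpace Y]
variable {d : ℕ} (A : Fin d → X →L[ℂ] X) (C : X →L[ℂ] Y)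

local notation "⟪" x ", " y "⟫" => @inner ℂ _ _ x y

lemma sum_sum_eq (n : Fin d → ℕ) (z : X) :
    ∑ v ∈ abWords n, ∑ u ∈ abWords n,
      adjoint (funProd A v) ((adjoint C) (C (funProd A u z)))
      = adjoint (opT A C n) ((opT A C n) z) := by
  have h1 : ∀ v : Fin (∑ i, n i) → Fin d,
      ∑ u ∈ abWords n, adjoint (funProd A v) ((adjoint C) (C (funProd A u z)))
      = ((adjoint (funProd A v)).comp (adjoint C)) (opT A C n z) := by
    intro v
    rw [opT_eq, ContinuousLinearMap.sum_apply,
      map_sum ((adjoint (funProd A v)).comp (adjoint C)) (fun u => (C ∘L funProd A u) z)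
        (abWords n)]
    rfl
  rw [Finset.sum_congr rfl fun v _ => h1 v]
  have h2 : adjoint (opT A C n)
      = ∑ v ∈ abWords n, (adjoint (funProd A v)).comp (adjoint C) := by
    rw [opT_eq, map_sum ContinuousLinearMap.adjoint (fun v => C ∘L funProd A v) (abWords n)]
    exact Finset.sum_congr rfl fun v _ => adjoint_comp _ _
  rw [h2, ContinuousLinearMap.sum_apply]

lemma hasSum_g (Ga : X →L[ℂ] X)
    (hGa : ∀ x : X, HasSum (fun n : Fin d → ℕ =>
      wt n • ∑ v ∈ abWords n, ∑ u ∈ abWords n,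
        adjoint (funProd A v) ((adjoint C) (C (funProd A u x)))) (Ga x)) (z : X) :
    HasSum (fun n : Fin d → ℕ => wt n * ‖opT A C n z‖ ^ 2)
      (RCLike.re ⟪Ga z, z⟫) := by
  have h := hGa z
  simp_rw [sum_sum_eq A C _ z] at h
  set φ : X →L[ℝ] ℝ := Complex.reCLM.comp ((innerSL ℂ z).restrictScalars ℝ) with hφ
  have h2 := φ.hasSum h
  have hterm : ∀ n : Fin d → ℕ,
      φ (wt n • adjoint (opT A C n) ((opT A C n) z)) = wt n * ‖opT A C n z‖ ^ 2 := by
    intro n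
    rw [map_smul]
    have : φ (adjoint (opT A C n) ((opT A C n) z)) = ‖opT A C n z‖ ^ 2 := by
      simp only [hφ, ContinuousLinearMap.coe_comp', Function.comp_apply,
        ContinuousLinearMap.coe_restrictScalars', innerSL_apply_apply, Complex.reCLM_apply]
      rw [adjoint_inner_right]
      exact_mod_cast inner_self_eq_norm_sq (𝕜 := ℂ) _
    rw [this]
    simp
  have hsum : φ (Ga z) = RCLike.re ⟪Ga z, z⟫ := by
    simp only [hφ, ContinuousLinearMap.coe_comp', Function.comp_apply,
      ContinuousLinearMap.coe_restrictScalars', innerSL_apply_apply, Complex.reCLM_apply]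
    exact_mod_cast (inner_re_symm (𝕜 := ℂ) (Ga z) z).symm
  rw [← hsum]
  exact (funext hterm : _) ▸ h2

end Stmt8Aux

namespace Stmt8Aux

variable {X Y : Type*}
  [NormedAddCommGroup X] [InnerProductSpace ℂ X] [CompleteSpace X]
  [NormedAddCommGroup Y] [InnerProductSpace ℂ Y] [CompleteSpace Y]
variable {d : ℕ} (A : Fin d → X →L[ℂ] X) (C : X →L[ℂ] Y)

local notation "⟪" x ", " y "⟫" => @inner ℂ _ _ x y

lemma key_ineq (m : Fin d → ℕ) (hm : m ≠ 0) (x : X) :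
    wt m * ‖opT A C m x‖ ^ 2 ≤ ∑ j, (if m j = 0 then 0
      else wt (m - Pi.single j 1) * ‖opT A C (m - Pi.single j 1) ((A j) x)‖ ^ 2) := by
  have hS : 0 < ∑ i, m i := by
    obtain ⟨j, hj⟩ := Function.ne_iff.mp hm
    calc (0 : ℕ) < m j := Nat.pos_of_ne_zero (by simpa using hj)
    _ ≤ _ := Finset.single_le_sum (fun i _ => Nat.zero_le _) (Finset.mem_univ j)
  have hSr : ((∑ i, m i : ℕ) : ℝ) ≠ 0 := by exact_mod_cast hS.ne'
  set y : Fin d → Y := fun j => if m j = 0 then 0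
    else opT A C (m - Pi.single j 1) ((A j) x) with hy
  set c : Fin d → ℝ := fun j => (m j : ℝ) / ((∑ i, m i : ℕ) : ℝ) with hc
  have hc0 : ∀ j, 0 ≤ c j := fun j => by
    rw [hc]; positivity
  have hcz : ∀ j, c j = 0 ↔ m j = 0 := by
    intro j
    rw [hc]
    simp only [div_eq_zero_iff, hSr, or_false, Nat.cast_eq_zero]
  have hc1 : ∑ j, c j ≤ 1 := by
    rw [hc, ← Finset.sum_div, div_le_one (by exact_mod_cast hS)]
    exact le_of_eq (by push_cast; ring)
  have hdecomp : opT A C m x = ∑ j, y j := opT_decomp A C m hm x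
  have hcs := cs_sq y c hc0 hc1 (fun j hj => by rw [hy]; simp [(hcz j).mp hj])
  rw [hdecomp] at *
  calc wt m * ‖∑ j, y j‖ ^ 2
      ≤ wt m * ∑ j, (if c j = 0 then 0 else ‖y j‖ ^ 2 / c j) :=
        mul_le_mul_of_nonneg_left hcs (wt_nonneg m)
    _ = ∑ j, wt m * (if c j = 0 then 0 else ‖y j‖ ^ 2 / c j) := Finset.mul_sum _ _ _
    _ ≤ _ := by
        refine le_of_eq (Finset.sum_congr rfl fun j _ => ?_)
        by_cases hj : m j = 0
        · rw [if_pos ((hcz j).mpr hj), if_pos hj, mul_zero]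
        · have hjpos : 0 < m j := Nat.pos_of_ne_zero hj
          have hid := wt_identity (j := j) hjpos
          have hmj : (m j : ℝ) ≠ 0 := by exact_mod_cast hj
          rw [if_neg ((not_iff_not.mpr (hcz j)).mpr hj), if_neg hj]
          have hyj : y j = opT A C (m - Pi.single j 1) ((A j) x) := by
            rw [hy]; simp [hj]
          rw [hyj] at *
          rw [hc]
          field_simp
          push_cast at hid ⊢
          linear_combination ‖opT A C (m - Pi.single j 1) ((A j) x)‖ ^ 2 * hid

end Stmt8Aux

namespace Stmt8Aux

variable {X Y : Type*}
  [NormedAddCommGroup X] [InnerProductSpace ℂ X] [CompleteSpace X]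
  [NormedAddCommGroup Y] [InnerProductSpace ℂ Y] [CompleteSpace Y]
variable {d : ℕ} (A : Fin d → X →L[ℂ] X) (C : X →L[ℂ] Y)

local notation "⟪" x ", " y "⟫" => @inner ℂ _ _ x y

lemma g_le (Ga : X →L[ℂ] X)
    (hGa : ∀ x : X, HasSum (fun n : Fin d → ℕ =>
      wt n • ∑ v ∈ abWords n, ∑ u ∈ abWords n,
        adjoint (funProd A v) ((adjoint C) (C (funProd A u x)))) (Ga x)) (x : X) :
    RCLike.re ⟪Ga x, x⟫ ≤ ‖C x‖ ^ 2 + ∑ j, RCLike.re ⟪Ga ((A j) x), (A j) x⟫ := by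
  have hL := hasSum_g A C Ga hGa x
  have hR : HasSum (fun m : Fin d → ℕ => (if m = 0 then ‖C x‖ ^ 2 else 0)
      + ∑ j, (if m j = 0 then 0
        else wt (m - Pi.single j 1) * ‖opT A C (m - Pi.single j 1) ((A j) x)‖ ^ 2))
      (‖C x‖ ^ 2 + ∑ j, RCLike.re ⟪Ga ((A j) x), (A j) x⟫) := by
    refine HasSum.add (hasSum_ite_eq 0 _) (hasSum_sum fun j _ => ?_)
    have hj := hasSum_g A C Ga hGa ((A j) x)
    have hinj : Function.Injective (fun n : Fin d → ℕ => n + Pi.single j 1) :=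
      add_left_injective _
    refine (Function.Injective.hasSum_iff hinj ?_).mp ?_
    · intro m hm
      have hmj : m j = 0 := by
        by_contra hne
        refine hm ⟨m - Pi.single j 1, funext fun i => ?_⟩
        by_cases hij : i = j
        · subst hij
          simp only [Pi.add_apply, Pi.sub_apply, Pi.single_eq_same]
          omega
        · simp [Pi.single_eq_of_ne hij]
      rw [if_pos hmj]
    · have heq : ((fun m : Fin d → ℕ => (if m j = 0 then (0:ℝ)
          else wt (m - Pi.single j 1) * ‖opT A C (m - Pi.single j 1) ((A j) x)‖ ^ 2))
          ∘ (fun n : Fin d → ℕ => n + Pi.single j 1))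
          = fun n : Fin d → ℕ => wt n * ‖opT A C n ((A j) x)‖ ^ 2 := by
        funext n
        have hnz : ((n + Pi.single j 1 : Fin d → ℕ)) j ≠ 0 := by
          simp [Pi.single_eq_same]
        have hsub : ((n + Pi.single j 1 : Fin d → ℕ)) - Pi.single j 1 = n := by
          funext i
          by_cases hij : i = j
          · subst hij; simp [Pi.single_eq_same]
          · simp [Pi.single_eq_of_ne hij]
        simp only [Function.comp_apply, if_neg hnz, hsub]
      rw [heq]
      exact hj
  refine hasSum_le (fun m => ?_) hL hR
  by_cases hm : m = 0
  · subst hm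
    rw [if_pos rfl]
    have h0 : ∀ j, ((0 : Fin d → ℕ) j = 0) := fun j => rfl
    have : (∑ j, (if (0 : Fin d → ℕ) j = 0 then (0:ℝ)
        else wt ((0 : Fin d → ℕ) - Pi.single j 1)
          * ‖opT A C ((0 : Fin d → ℕ) - Pi.single j 1) ((A j) x)‖ ^ 2)) = 0 := by
      refine Finset.sum_eq_zero fun j _ => ?_
      rw [if_pos (h0 j)]
    rw [this, add_zero, wt_zero, opT_zero, one_mul]
  · rw [if_neg hm, zero_add]
    exact key_ineq A C m hm x

end Stmt8Aux



local notation "⟪" x ", " y "⟫" => @inner ℂ _ _ x y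

open Stmt8Aux

/-- The abelianized observability gramian
`G^a = ∑_n (n!/|n|!) ∑_{v,u ∈ a⁻¹(n)} A^{vᵀ*} C* C A^u` of an a-output-stable pair
satisfies the reverse Stein inequality `G^a - ∑_j A_j* G^a A_j ≤ C* C`. -/
theorem stmt8 {d : ℕ} (A : Fin d → X →L[ℂ] X) (C : X →L[ℂ] Y) (Ga : X →L[ℂ] X)
    (hGa : ∀ x : X, HasSum (fun n : Fin d → ℕ =>
      wt n • ∑ v ∈ abWords n, ∑ u ∈ abWords n,
        adjoint (funProd A v) ((adjoint C) (C (funProd A u x)))) (Ga x)) :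
    (adjoint C ∘L C + ∑ j, adjoint (A j) ∘L Ga ∘L A j - Ga).IsPositive := by
  have hGa' : ∀ x : X, HasSum
      (fun n : Fin d → ℕ => wt n • adjoint (opT A C n) ((opT A C n) x)) (Ga x) := by
    intro x
    have h := hGa x
    simp_rw [sum_sum_eq A C _ x] at h
    exact h
  have hsym : (Ga : X →ₗ[ℂ] X).IsSymmetric := by
    intro x y
    have h1 := (innerSL ℂ y).hasSum (hGa' x)
    have h2 := (innerSL ℂ x).hasSum (hGa' y)
    have h1' := h1.map (starAddEquiv : ℂ ≃+ ℂ) continuous_star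
    have hterm : ∀ n : Fin d → ℕ,
        (starAddEquiv : ℂ ≃+ ℂ) ((innerSL ℂ y) (wt n • adjoint (opT A C n) ((opT A C n) x)))
        = (innerSL ℂ x) (wt n • adjoint (opT A C n) ((opT A C n) y)) := by
      intro n
      simp only [starAddEquiv_apply, innerSL_apply_apply]
      rw [RCLike.real_smul_eq_coe_smul (K := ℂ), RCLike.real_smul_eq_coe_smul (K := ℂ),
        inner_smul_right, inner_smul_right, star_mul']
      rw [← starRingEnd_apply, ← starRingEnd_apply, RCLike.conj_ofReal, inner_conj_symm,
        adjoint_inner_left, adjoint_inner_right]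
    have h1'' : HasSum
        (fun n : Fin d → ℕ => (innerSL ℂ x) (wt n • adjoint (opT A C n) ((opT A C n) y)))
        (star ((innerSL ℂ y) (Ga x))) := by
      have := h1'
      simp only [Function.comp_def] at this
      rw [funext hterm] at this
      exact this
    have hkey : star ((innerSL ℂ y) (Ga x)) = (innerSL ℂ x) (Ga y) := h1''.unique h2
    simp only [innerSL_apply_apply] at hkey
    calc ⟪(Ga : X →ₗ[ℂ] X) x, y⟫ = star ⟪y, Ga x⟫ := by
          rw [← starRingEnd_apply, inner_conj_symm]; rfl
      _ = ⟪x, (Ga : X →ₗ[ℂ] X) y⟫ := hkey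
  have hGsa : IsSelfAdjoint Ga := ContinuousLinearMap.isSelfAdjoint_iff_isSymmetric.mpr hsym
  constructor
  · have h1 : IsSelfAdjoint (adjoint C ∘L C) := by
      rw [ContinuousLinearMap.isSelfAdjoint_iff']
      rw [ContinuousLinearMap.adjoint_comp, ContinuousLinearMap.adjoint_adjoint]
    have h2 : ∀ j, IsSelfAdjoint (adjoint (A j) ∘L Ga ∘L A j) := fun j =>
      hGsa.adjoint_conj (A j)
    have hsum : IsSelfAdjoint (∑ j, adjoint (A j) ∘L Ga ∘L A j) := by
      rw [IsSelfAdjoint, star_sum]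
      exact Finset.sum_congr rfl fun j _ => h2 j
    exact ContinuousLinearMap.isSelfAdjoint_iff_isSymmetric.mp ((h1.add hsum).sub hGsa)
  · intro x
    have hexp : (adjoint C ∘L C + ∑ j, adjoint (A j) ∘L Ga ∘L A j - Ga).reApplyInnerSelf x
        = ‖C x‖ ^ 2 + (∑ j, RCLike.re ⟪Ga ((A j) x), (A j) x⟫) - RCLike.re ⟪Ga x, x⟫ := by
      rw [ContinuousLinearMap.reApplyInnerSelf_apply]
      rw [ContinuousLinearMap.sub_apply, ContinuousLinearMap.add_apply]
      rw [inner_sub_left, inner_add_left, map_sub, map_add]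
      congr 1
      congr 1
      · rw [ContinuousLinearMap.coe_comp', Function.comp_apply, adjoint_inner_left]
        exact inner_self_eq_norm_sq (𝕜 := ℂ) _
      · rw [ContinuousLinearMap.sum_apply, sum_inner, map_sum]
        refine Finset.sum_congr rfl fun j _ => ?_
        congr 1
        rw [ContinuousLinearMap.coe_comp', Function.comp_apply,
          ContinuousLinearMap.coe_comp', Function.comp_apply, adjoint_inner_left]
    rw [hexp]
    have := g_le A C Ga hGa x
    linarith


end
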